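/- Let N ∈ ℕ, let a : ℤ × ℤ → ℂ be a summable family, and let f¹, f² : ℤ → Matrix (Fin N) (Fin N) ℂ be families with (‖f¹_r‖)_r and (‖f²_l‖)_l summable. For |z| = |t| = 1 define f₁(z) := ∑'_r f¹_r · z^r, f₂(t) := ∑'_l f²_l · t^l, and K(z,t) := ∑'_{(n,m)} a_{n,m} · z^n · (conj t)^m. Then ∫₀^{2π} ∫₀^{2π} trace((f₁(e^{iθ}))ᴴ · f₂(e^{iφ})) · K(e^{iθ}, e^{iφ}) · (−i e^{−iθ}) · (i e^{iφ}) dφ dθ = (2π)² · ∑'_{(n,m)} a_{n,m} · trace((f¹_{n−1})ᴴ · f²_{m−1}). -/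

import Mathlib

open scoped Real
open Matrix
attribute [local instance] Matrix.normedAddCommGroup

attribute [local instance] Matrix.normedSpace
set_option maxHeartbeats 1000000

lemma aux_norm_exp_zpow (x : ℝ) (k : ℤ) : ‖Complex.exp (x * Complex.I) ^ k‖ = 1 := by
  rw [norm_zpow, Complex.norm_exp]
  simp

lemma aux_cont_exp_zpow (k : ℤ) :
    Continuous fun x : ℝ => Complex.exp (x * Complex.I) ^ k := by
  apply Continuous.zpow₀
  · exact Complex.continuous_exp.comp (Complex.continuous_ofReal.mul continuous_const)
  · exact fun x => Or.inl (Complex.exp_ne_zero _)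

lemma aux_J (k : ℤ) :
    (∫ θ in (0 : ℝ)..(2 * π), Complex.exp (θ * Complex.I) ^ k)
      = if k = 0 then ((2 * π : ℝ) : ℂ) else 0 := by
  have h : ∀ θ : ℝ, Complex.exp (θ * Complex.I) ^ k
      = Complex.exp ((k * Complex.I) * θ) := by
    intro θ
    rw [← Complex.exp_int_mul]
    ring_nf
  simp_rw [h]
  rcases eq_or_ne k 0 with hk | hk
  · simp [hk]
  · have hc : (k : ℂ) * Complex.I ≠ 0 := by
      simp [Complex.I_ne_zero, Complex.ofReal_ne_zero, hk]
    rw [integral_exp_mul_complex hc, if_neg hk]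
    have h1 : Complex.exp ((k : ℂ) * Complex.I * ((2 * π : ℝ) : ℂ)) = 1 := by
      rw [show (k : ℂ) * Complex.I * ((2 * π : ℝ) : ℂ) = k * (2 * π * Complex.I) by
        push_cast; ring]
      exact Complex.exp_int_mul_two_pi_mul_I k
    push_cast at h1 ⊢
    rw [h1]
    simp

lemma aux_trace_bound {N : ℕ} (A B : Matrix (Fin N) (Fin N) ℂ) :
    ‖Matrix.trace (Aᴴ * B)‖ ≤ (N : ℝ) ^ 2 * ‖A‖ * ‖B‖ := by
  rw [Matrix.trace]
  calc ‖∑ i, (Aᴴ * B).diag i‖ ≤ ∑ i, ‖(Aᴴ * B).diag i‖ := norm_sum_le _ _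
    _ ≤ ∑ _i : Fin N, (N : ℝ) * (‖A‖ * ‖B‖) := by
        apply Finset.sum_le_sum
        intro i _
        rw [Matrix.diag, Matrix.mul_apply]
        calc ‖∑ j, Aᴴ i j * B j i‖ ≤ ∑ j, ‖Aᴴ i j * B j i‖ := norm_sum_le _ _
          _ ≤ ∑ _j : Fin N, ‖A‖ * ‖B‖ := by
              apply Finset.sum_le_sum
              intro j _
              rw [norm_mul, Matrix.conjTranspose_apply, norm_star]
              exact mul_le_mul (A.norm_entry_le_entrywise_sup_norm)
                (B.norm_entry_le_entrywise_sup_norm) (norm_nonneg _) (norm_nonneg _)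
          _ = (N : ℝ) * (‖A‖ * ‖B‖) := by simp [Finset.sum_const]
    _ = (N : ℝ) ^ 2 * ‖A‖ * ‖B‖ := by simp [Finset.sum_const]; ring

lemma aux_conj_zpow {u : ℂ} (hu : ‖u‖ = 1) (r : ℤ) :
    (starRingEnd ℂ) (u ^ r) = u ^ (-r) := by
  have hns : Complex.normSq u = 1 := by
    rw [Complex.normSq_eq_norm_sq, hu, one_pow]
  have h2 : (starRingEnd ℂ) u = u⁻¹ := by
    rw [Complex.inv_def, hns]; simp
  rw [map_zpow₀, h2, _root_.inv_zpow, ← _root_.zpow_neg]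

lemma aux_summable_smul {N : ℕ} {f : ℤ → Matrix (Fin N) (Fin N) ℂ}
    (hf : Summable fun r => ‖f r‖) {u : ℂ} (hu : ‖u‖ = 1) :
    Summable fun r : ℤ => u ^ r • f r := by
  apply Summable.of_norm
  have h : ∀ r : ℤ, ‖u ^ r • f r‖ = ‖f r‖ := by
    intro r
    rw [norm_smul, norm_zpow, hu, _root_.one_zpow, one_mul]
  exact hf.congr fun r => (h r).symm

lemma aux_trace_expand {N : ℕ} (f1 f2 : ℤ → Matrix (Fin N) (Fin N) ℂ)
    (hf1 : Summable fun r => ‖f1 r‖) (hf2 : Summable fun l => ‖f2 l‖)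
    {u v : ℂ} (hu : ‖u‖ = 1) (hv : ‖v‖ = 1) :
    Matrix.trace ((∑' r : ℤ, u ^ r • f1 r)ᴴ * (∑' l : ℤ, v ^ l • f2 l))
      = ∑' q : ℤ × ℤ, u ^ (-q.1) * v ^ q.2 * Matrix.trace ((f1 q.1)ᴴ * f2 q.2) := by
  set B := ∑' l : ℤ, v ^ l • f2 l with hB_def
  have hB : HasSum (fun l : ℤ => v ^ l • f2 l) B := (aux_summable_smul hf2 hv).hasSum
  have hcont_tr : Continuous fun M : Matrix (Fin N) (Fin N) ℂ => Matrix.trace M :=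
    Continuous.matrix_trace continuous_id
  have hinner : ∀ M : Matrix (Fin N) (Fin N) ℂ,
      HasSum (fun l : ℤ => v ^ l * Matrix.trace (Mᴴ * f2 l)) (Matrix.trace (Mᴴ * B)) := by
    intro M
    have h1 : HasSum (fun l : ℤ => Mᴴ * (v ^ l • f2 l)) (Mᴴ * B) :=
      hB.map (AddMonoidHom.mulLeft Mᴴ) (continuous_const.matrix_mul continuous_id)
    have h2 := h1.map (Matrix.traceAddMonoidHom (Fin N) ℂ) hcont_tr
    simpa [Matrix.traceAddMonoidHom, Function.comp_def, Matrix.mul_smul,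
      Matrix.trace_smul, smul_eq_mul] using h2
  have hA : HasSum (fun r : ℤ => u ^ r • f1 r) (∑' r : ℤ, u ^ r • f1 r) :=
    (aux_summable_smul hf1 hu).hasSum
  have houter : HasSum (fun r : ℤ => u ^ (-r) * Matrix.trace ((f1 r)ᴴ * B))
      (Matrix.trace ((∑' r : ℤ, u ^ r • f1 r)ᴴ * B)) := by
    have h1 : HasSum (fun r : ℤ => (u ^ r • f1 r)ᴴ * B)
        ((∑' r : ℤ, u ^ r • f1 r)ᴴ * B) :=
      hA.matrix_conjTranspose.map (AddMonoidHom.mulRight B)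
        (continuous_id.matrix_mul continuous_const)
    have h2 := h1.map (Matrix.traceAddMonoidHom (Fin N) ℂ) hcont_tr
    have h3 : ∀ r : ℤ, Matrix.trace ((u ^ r • f1 r)ᴴ * B)
        = u ^ (-r) * Matrix.trace ((f1 r)ᴴ * B) := by
      intro r
      rw [Matrix.conjTranspose_smul, Matrix.smul_mul, Matrix.trace_smul, smul_eq_mul]
      congr 1
      exact aux_conj_zpow hu r
    have h4 : (fun r : ℤ => (Matrix.traceAddMonoidHom (Fin N) ℂ) ((u ^ r • f1 r)ᴴ * B))
        = fun r : ℤ => u ^ (-r) * Matrix.trace ((f1 r)ᴴ * B) := funext fun r => h3 r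
    rw [Function.comp_def, h4] at h2
    exact h2
  have hsq : Summable fun q : ℤ × ℤ =>
      u ^ (-q.1) * v ^ q.2 * Matrix.trace ((f1 q.1)ᴴ * f2 q.2) := by
    apply Summable.of_norm
    refine Summable.of_nonneg_of_le (fun q => norm_nonneg _) (fun q => ?_)
      (((hf1.mul_of_nonneg hf2 (fun _ => norm_nonneg _) fun _ => norm_nonneg _).mul_left
        ((N : ℝ) ^ 2)))
    · rw [norm_mul, norm_mul, norm_zpow, norm_zpow, hu, hv, _root_.one_zpow,
        _root_.one_zpow, one_mul, one_mul]
      calc ‖Matrix.trace ((f1 q.1)ᴴ * f2 q.2)‖ ≤ (N : ℝ) ^ 2 * ‖f1 q.1‖ * ‖f2 q.2‖ :=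
            aux_trace_bound _ _
        _ = (N : ℝ) ^ 2 * (‖f1 q.1‖ * ‖f2 q.2‖) := by ring
  calc Matrix.trace ((∑' r : ℤ, u ^ r • f1 r)ᴴ * B)
      = ∑' r : ℤ, u ^ (-r) * Matrix.trace ((f1 r)ᴴ * B) := houter.tsum_eq.symm
    _ = ∑' r : ℤ, ∑' l : ℤ, u ^ (-r) * v ^ l * Matrix.trace ((f1 r)ᴴ * f2 l) := by
        apply tsum_congr
        intro r
        rw [← (hinner (f1 r)).tsum_eq, ← Summable.tsum_mul_left _ (hinner (f1 r)).summable]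
        apply tsum_congr
        intro l
        ring
    _ = ∑' q : ℤ × ℤ, u ^ (-q.1) * v ^ q.2 * Matrix.trace ((f1 q.1)ᴴ * f2 q.2) := by
        exact (Summable.tsum_prod' hsq fun r =>
          (((hinner (f1 r)).summable.mul_left (u ^ (-r))).congr fun l => by ring)).symm


/-- The double contour integral over the unit circles of
`tr(f₁(z)* f₂(t)) ∑ aₙₘ zⁿ t̄ᵐ dz̄ dt` equals `(2π)² ∑ aₙₘ tr((f¹ₙ₋₁)* f²ₘ₋₁)`:
the computational content of the paper's formula for the symplectic form at the
trivial bundle. -/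
theorem symplectic_form_double_series
    (N : ℕ) (a : ℤ × ℤ → ℂ) (ha : Summable a)
    (f1 f2 : ℤ → Matrix (Fin N) (Fin N) ℂ)
    (hf1 : Summable fun r => ‖f1 r‖) (hf2 : Summable fun l => ‖f2 l‖) :
    (∫ θ in (0 : ℝ)..(2 * π), ∫ φ in (0 : ℝ)..(2 * π),
      Matrix.trace
        ((∑' r : ℤ, Complex.exp (θ * Complex.I) ^ r • f1 r)ᴴ *
          (∑' l : ℤ, Complex.exp (φ * Complex.I) ^ l • f2 l)) *
      (∑' p : ℤ × ℤ, a p * Complex.exp (θ * Complex.I) ^ p.1 *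
          (starRingEnd ℂ (Complex.exp (φ * Complex.I))) ^ p.2) *
      (-Complex.I * Complex.exp (-(θ * Complex.I))) *
      (Complex.I * Complex.exp (φ * Complex.I)))
    = ((2 * π : ℝ) : ℂ) ^ 2 *
        ∑' p : ℤ × ℤ, a p * Matrix.trace ((f1 (p.1 - 1))ᴴ * f2 (p.2 - 1)) := by
  have hnorm : ∀ x : ℝ, ‖Complex.exp (x * Complex.I)‖ = 1 := by
    intro x
    simpa using aux_norm_exp_zpow x 1
  have hz0 : ∀ x : ℝ, Complex.exp (x * Complex.I) ≠ 0 := fun x => Complex.exp_ne_zero _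
  set c : (ℤ × ℤ) × (ℤ × ℤ) → ℂ :=
    fun q => a q.2 * Matrix.trace ((f1 q.1.1)ᴴ * f2 q.1.2) with hc_def
  set al : (ℤ × ℤ) × (ℤ × ℤ) → ℤ := fun q => q.2.1 - q.1.1 - 1 with hal_def
  set be : (ℤ × ℤ) × (ℤ × ℤ) → ℤ := fun q => q.1.2 - q.2.2 + 1 with hbe_def
  -- summability of c in norm
  have hXnorm : Summable fun rl : ℤ × ℤ =>
      (N : ℝ) ^ 2 * (‖f1 rl.1‖ * ‖f2 rl.2‖) :=
    (hf1.mul_of_nonneg hf2 (fun _ => norm_nonneg _) fun _ => norm_nonneg _).mul_left _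
  have hanorm : Summable fun p : ℤ × ℤ => ‖a p‖ := summable_norm_iff.mpr ha
  have htr_le : ∀ rl : ℤ × ℤ, ‖Matrix.trace ((f1 rl.1)ᴴ * f2 rl.2)‖
      ≤ (N : ℝ) ^ 2 * (‖f1 rl.1‖ * ‖f2 rl.2‖) := by
    intro rl
    calc ‖Matrix.trace ((f1 rl.1)ᴴ * f2 rl.2)‖ ≤ (N : ℝ) ^ 2 * ‖f1 rl.1‖ * ‖f2 rl.2‖ :=
          aux_trace_bound _ _
      _ = (N : ℝ) ^ 2 * (‖f1 rl.1‖ * ‖f2 rl.2‖) := by ring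
  have hc_norm : Summable fun q : (ℤ × ℤ) × (ℤ × ℤ) => ‖c q‖ := by
    refine Summable.of_nonneg_of_le (fun q => norm_nonneg _) (fun q => ?_)
      (hXnorm.mul_of_nonneg hanorm
        (fun rl => by positivity) fun p => norm_nonneg _)
    rw [hc_def, norm_mul]
    calc ‖a q.2‖ * ‖Matrix.trace ((f1 q.1.1)ᴴ * f2 q.1.2)‖
        ≤ ‖a q.2‖ * ((N : ℝ) ^ 2 * (‖f1 q.1.1‖ * ‖f2 q.1.2‖)) := by
          exact mul_le_mul_of_nonneg_left (htr_le q.1) (norm_nonneg _)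
      _ = (N : ℝ) ^ 2 * (‖f1 q.1.1‖ * ‖f2 q.1.2‖) * ‖a q.2‖ := by ring
  -- pointwise expansion of the integrand
  have hpt : ∀ θ φ : ℝ,
      (Matrix.trace
        ((∑' r : ℤ, Complex.exp (θ * Complex.I) ^ r • f1 r)ᴴ *
          (∑' l : ℤ, Complex.exp (φ * Complex.I) ^ l • f2 l)) *
      (∑' p : ℤ × ℤ, a p * Complex.exp (θ * Complex.I) ^ p.1 *
          (starRingEnd ℂ (Complex.exp (φ * Complex.I))) ^ p.2) *
      (-Complex.I * Complex.exp (-(θ * Complex.I))) *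
      (Complex.I * Complex.exp (φ * Complex.I)))
      = ∑' q : (ℤ × ℤ) × (ℤ × ℤ),
          c q * Complex.exp (θ * Complex.I) ^ (al q) *
            Complex.exp (φ * Complex.I) ^ (be q) := by
    intro θ φ
    set z := Complex.exp (θ * Complex.I) with hz_def
    set w := Complex.exp (φ * Complex.I) with hw_def
    have hker : ∀ p : ℤ × ℤ, a p * z ^ p.1 * (starRingEnd ℂ w) ^ p.2
        = a p * z ^ p.1 * w ^ (-p.2) := by
      intro p
      rw [← map_zpow₀, aux_conj_zpow (hnorm φ)]
    rw [aux_trace_expand f1 f2 hf1 hf2 (hnorm θ) (hnorm φ)]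
    rw [tsum_congr hker]
    have hX : Summable fun rl : ℤ × ℤ =>
        ‖z ^ (-rl.1) * w ^ rl.2 * Matrix.trace ((f1 rl.1)ᴴ * f2 rl.2)‖ := by
      refine Summable.of_nonneg_of_le (fun rl => norm_nonneg _) (fun rl => ?_) hXnorm
      rw [norm_mul, norm_mul, hz_def, hw_def, aux_norm_exp_zpow, aux_norm_exp_zpow,
        one_mul, one_mul]
      exact htr_le rl
    have hY : Summable fun p : ℤ × ℤ => ‖a p * z ^ p.1 * w ^ (-p.2)‖ := by
      refine Summable.of_nonneg_of_le (fun p => norm_nonneg _) (fun p => ?_) hanorm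
      rw [norm_mul, norm_mul, hz_def, hw_def, aux_norm_exp_zpow, aux_norm_exp_zpow,
        mul_one, mul_one]
    rw [tsum_mul_tsum_of_summable_norm hX hY, ← tsum_mul_right, ← tsum_mul_right]
    apply tsum_congr
    intro q
    have e1 : z ^ (al q) = z ^ q.2.1 * z ^ (-q.1.1) * z⁻¹ := by
      simp only [hal_def]
      rw [show q.2.1 - q.1.1 - 1 = q.2.1 + (-q.1.1) + (-1) by ring,
        zpow_add₀ (hz0 θ), zpow_add₀ (hz0 θ), _root_.zpow_neg_one]
    have e2 : w ^ (be q) = w ^ q.1.2 * w ^ (-q.2.2) * w := by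
      simp only [hbe_def]
      rw [show q.1.2 - q.2.2 + 1 = q.1.2 + (-q.2.2) + 1 by ring,
        zpow_add₀ (hz0 φ), zpow_add₀ (hz0 φ), zpow_one]
    rw [e1, e2, hc_def]
    rw [show Complex.exp (-(θ * Complex.I)) = z⁻¹ by rw [hz_def, ← Complex.exp_neg]]
    have hII : -Complex.I * Complex.I = 1 := by
      rw [neg_mul, Complex.I_mul_I, neg_neg]
    field_simp
    ring_nf
    rw [Complex.I_sq]
    ring
  simp_rw [hpt]
  have h2π : (0:ℝ) ≤ 2 * π := by positivity
  have hvol : (MeasureTheory.volume (Set.Ioc (0:ℝ) (2*π))).toReal = 2 * π := by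
    rw [Real.volume_Ioc, ENNReal.toReal_ofReal (by linarith)]
    ring
  set Jc : ℤ → ℂ := fun k => if k = 0 then ((2 * π : ℝ) : ℂ) else 0 with hJc_def
  have hJc_norm : ∀ k : ℤ, ‖Jc k‖ ≤ 2 * π := by
    intro k
    simp only [hJc_def]
    rcases eq_or_ne k 0 with hk | hk
    · rw [if_pos hk, Complex.norm_real, Real.norm_eq_abs, abs_of_nonneg h2π]
    · rw [if_neg hk]
      simp [h2π]
  -- inner swap
  have hinner : ∀ θ : ℝ,
      (∫ φ in (0:ℝ)..(2*π), ∑' q : (ℤ × ℤ) × (ℤ × ℤ),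
          c q * Complex.exp (θ * Complex.I) ^ (al q) *
            Complex.exp (φ * Complex.I) ^ (be q))
      = ∑' q : (ℤ × ℤ) × (ℤ × ℤ),
          (c q * Jc (be q)) * Complex.exp (θ * Complex.I) ^ (al q) := by
    intro θ
    have hint : ∀ q : (ℤ × ℤ) × (ℤ × ℤ),
        MeasureTheory.Integrable
          (fun φ : ℝ => c q * Complex.exp (θ * Complex.I) ^ (al q) *
            Complex.exp (φ * Complex.I) ^ (be q))
          (MeasureTheory.volume.restrict (Set.Ioc (0:ℝ) (2*π))) :=
      fun q => (continuous_const.mul (aux_cont_exp_zpow (be q))).integrableOn_Ioc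
    have hns : ∀ (q : (ℤ × ℤ) × (ℤ × ℤ)) (φ : ℝ),
        ‖c q * Complex.exp (θ * Complex.I) ^ (al q) *
          Complex.exp (φ * Complex.I) ^ (be q)‖ = ‖c q‖ := by
      intro q φ
      rw [norm_mul, norm_mul, aux_norm_exp_zpow, aux_norm_exp_zpow, mul_one, mul_one]
    have hsum : Summable fun q : (ℤ × ℤ) × (ℤ × ℤ) =>
        ∫ φ in Set.Ioc (0:ℝ) (2*π),
          ‖c q * Complex.exp (θ * Complex.I) ^ (al q) *
            Complex.exp (φ * Complex.I) ^ (be q)‖ := by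
      have : ∀ q : (ℤ × ℤ) × (ℤ × ℤ),
          (∫ φ in Set.Ioc (0:ℝ) (2*π),
            ‖c q * Complex.exp (θ * Complex.I) ^ (al q) *
              Complex.exp (φ * Complex.I) ^ (be q)‖) = (2 * π) * ‖c q‖ := by
        intro q
        simp_rw [hns q]
        rw [MeasureTheory.setIntegral_const, MeasureTheory.measureReal_def, hvol, smul_eq_mul]
      exact (hc_norm.mul_left (2 * π)).congr fun q => (this q).symm
    rw [intervalIntegral.integral_of_le h2π,
      ← MeasureTheory.integral_tsum_of_summable_integral_norm hint hsum]
    apply tsum_congr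
    intro q
    rw [MeasureTheory.integral_const_mul, ← intervalIntegral.integral_of_le h2π, aux_J]
    ring
  simp_rw [hinner]
  -- outer swap
  have houter :
      (∫ θ in (0:ℝ)..(2*π), ∑' q : (ℤ × ℤ) × (ℤ × ℤ),
          (c q * Jc (be q)) * Complex.exp (θ * Complex.I) ^ (al q))
      = ∑' q : (ℤ × ℤ) × (ℤ × ℤ), (c q * Jc (be q)) * Jc (al q) := by
    have hint : ∀ q : (ℤ × ℤ) × (ℤ × ℤ),
        MeasureTheory.Integrable
          (fun θ : ℝ => (c q * Jc (be q)) * Complex.exp (θ * Complex.I) ^ (al q))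
          (MeasureTheory.volume.restrict (Set.Ioc (0:ℝ) (2*π))) :=
      fun q => (continuous_const.mul (aux_cont_exp_zpow (al q))).integrableOn_Ioc
    have hsum : Summable fun q : (ℤ × ℤ) × (ℤ × ℤ) =>
        ∫ θ in Set.Ioc (0:ℝ) (2*π),
          ‖(c q * Jc (be q)) * Complex.exp (θ * Complex.I) ^ (al q)‖ := by
      have heq : ∀ q : (ℤ × ℤ) × (ℤ × ℤ),
          (∫ θ in Set.Ioc (0:ℝ) (2*π),
            ‖(c q * Jc (be q)) * Complex.exp (θ * Complex.I) ^ (al q)‖)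
          = (2 * π) * ‖c q * Jc (be q)‖ := by
        intro q
        have : ∀ θ : ℝ, ‖(c q * Jc (be q)) * Complex.exp (θ * Complex.I) ^ (al q)‖
            = ‖c q * Jc (be q)‖ := by
          intro θ
          rw [norm_mul, aux_norm_exp_zpow, mul_one]
        simp_rw [this]
        rw [MeasureTheory.setIntegral_const, MeasureTheory.measureReal_def, hvol, smul_eq_mul]
      refine Summable.congr ?_ fun q => (heq q).symm
      refine Summable.of_nonneg_of_le (fun q => by positivity) (fun q => ?_)
        (hc_norm.mul_left ((2 * π) * (2 * π)))
      rw [norm_mul]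
      calc (2 * π) * (‖c q‖ * ‖Jc (be q)‖) ≤ (2 * π) * (‖c q‖ * (2 * π)) := by
            apply mul_le_mul_of_nonneg_left _ h2π
            exact mul_le_mul_of_nonneg_left (hJc_norm _) (norm_nonneg _)
        _ = 2 * π * (2 * π) * ‖c q‖ := by ring
    rw [intervalIntegral.integral_of_le h2π,
      ← MeasureTheory.integral_tsum_of_summable_integral_norm hint hsum]
    apply tsum_congr
    intro q
    rw [MeasureTheory.integral_const_mul, ← intervalIntegral.integral_of_le h2π, aux_J]
  rw [houter]
  -- evaluate the remaining sum
  set g : (ℤ × ℤ) × (ℤ × ℤ) → ℂ := fun q => (c q * Jc (be q)) * Jc (al q) with hg_def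
  set ι : ℤ × ℤ → (ℤ × ℤ) × (ℤ × ℤ) := fun p => ((p.1 - 1, p.2 - 1), p) with hι_def
  have hinj : Function.Injective ι := by
    intro p p' h
    exact congrArg Prod.snd h
  have hsupp : Function.support g ⊆ Set.range ι := by
    intro q hq
    have hbe0 : be q = 0 := by
      by_contra hbe
      apply hq
      rw [hg_def]
      simp [hJc_def, hbe]
    have hal0 : al q = 0 := by
      by_contra hal
      apply hq
      rw [hg_def]
      simp [hJc_def, hal]
    refine ⟨q.2, ?_⟩
    have h1 : q.1.1 = q.2.1 - 1 := by
      have := hal0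
      simp only [hal_def] at this
      omega
    have h2 : q.1.2 = q.2.2 - 1 := by
      have := hbe0
      simp only [hbe_def] at this
      omega
    rw [hι_def]
    exact Prod.ext (Prod.ext h1.symm h2.symm) rfl
  have hkey : (∑' q : (ℤ × ℤ) × (ℤ × ℤ), g q) = ∑' p : ℤ × ℤ, g (ι p) :=
    (hinj.tsum_eq hsupp).symm
  have hgι : ∀ p : ℤ × ℤ, g (ι p)
      = ((2 * π : ℝ) : ℂ) ^ 2 * (a p * Matrix.trace ((f1 (p.1 - 1))ᴴ * f2 (p.2 - 1))) := by
    intro p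
    have hal : al (ι p) = 0 := by simp [hal_def, hι_def]
    have hbe : be (ι p) = 0 := by simp [hbe_def, hι_def]
    simp only [hg_def]
    rw [hal, hbe]
    have : Jc 0 = ((2 * π : ℝ) : ℂ) := by simp [hJc_def]
    rw [this]
    simp only [hc_def, hι_def]
    push_cast
    ring
  rw [hkey, tsum_congr hgι, tsum_mul_left]
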